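/- arXiv:1401.3187 — 2 statements merged into one kernel-verified Lean document; each statement's English description precedes it below -/
import Mathlib

section
/- Let G be a connected half-transitive multigraph with bipartition V₁ ∪ V₂ and δ(G) ≥ 2μ(G). If G is not λ'-optimal (λ'(G) < ξ(G)) and A is a λ'-atom of G, then |A| ≥ 3. -/
/-- A multigraph: multiple edges allowed (recorded as edge multiplicities), no loops. -/
structure Multigraph (V : Type*) where
  mult : V → V → ℕ
  symm : ∀ u v, mult u v = mult v u
  loopless : ∀ v, mult v v = 0

namespace Multigraph

variable {V : Type*}

/-- Adjacency: at least one edge between `u` and `v`. -/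
def Adj (G : Multigraph V) (u v : V) : Prop := 0 < G.mult u v

instance (G : Multigraph V) (v : V) : DecidablePred (G.Adj v) :=
  fun u => inferInstanceAs (Decidable (0 < G.mult v u))

/-- Reachability by walks. -/
def Reachable (G : Multigraph V) : V → V → Prop := Relation.ReflTransGen G.Adj

/-- A multigraph is connected if it is nonempty and every two vertices are joined by a walk. -/
def Connected (G : Multigraph V) : Prop := Nonempty V ∧ ∀ u v, G.Reachable u v

/-- An automorphism of a multigraph: a permutation preserving all edge multiplicities. -/
def Aut (G : Multigraph V) : Type _ :=
  {e : Equiv.Perm V // ∀ u v, G.mult (e u) (e v) = G.mult u v}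

/-- A set of edges of `G`, given by sub-multiplicities. -/
structure EdgeSub (G : Multigraph V) where
  f : V → V → ℕ
  symm : ∀ u v, f u v = f v u
  le : ∀ u v, f u v ≤ G.mult u v

/-- The multigraph obtained by deleting the edge set `F`. -/
def deleteEdges (G : Multigraph V) (F : G.EdgeSub) : Multigraph V where
  mult u v := G.mult u v - F.f u v
  symm u v := by rw [G.symm u v, F.symm u v]
  loopless v := by simp [G.loopless v]

/-- `F` is an edge-cut if removing it disconnects `G`. -/
def IsEdgeCut (G : Multigraph V) (F : G.EdgeSub) : Prop := ¬ (G.deleteEdges F).Connected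

/-- `F` is a restricted edge-cut if removing it disconnects `G` and leaves no isolated vertex. -/
def IsRestrictedEdgeCut (G : Multigraph V) (F : G.EdgeSub) : Prop :=
  G.IsEdgeCut F ∧ ∀ v, ∃ u, (G.deleteEdges F).Adj v u

/-- `G` is bipartite with parts `V₁`, `V₂`. -/
def IsBipartition [DecidableEq V] [Fintype V] (G : Multigraph V) (V₁ V₂ : Finset V) : Prop :=
  Disjoint V₁ V₂ ∧ V₁ ∪ V₂ = Finset.univ ∧ ∀ u v, G.Adj u v → (u ∈ V₁ ↔ v ∈ V₂)

/-- A bipartite multigraph is half-transitive if `Aut G` is transitive on each part. -/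
def IsHalfTransitive [DecidableEq V] [Fintype V] (G : Multigraph V) (V₁ V₂ : Finset V) : Prop :=
  G.IsBipartition V₁ V₂ ∧
  (∀ u ∈ V₁, ∀ v ∈ V₁, ∃ e : G.Aut, e.1 u = v) ∧
  (∀ u ∈ V₂, ∀ v ∈ V₂, ∃ e : G.Aut, e.1 u = v)

/-- An imprimitive block for `Aut G`. -/
def IsImprimitiveBlock [DecidableEq V] (G : Multigraph V) (A : Finset V) [Fintype V] : Prop :=
  A.Nonempty ∧ A ≠ Finset.univ ∧
  ∀ e : G.Aut, A.image e.1 = A ∨ Disjoint (A.image e.1) A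

/-- The induced sub-multigraph on a vertex set `S`. -/
def induce (G : Multigraph V) (S : Finset V) : Multigraph {x // x ∈ S} where
  mult a b := G.mult a.1 b.1
  symm a b := G.symm a.1 b.1
  loopless a := G.loopless a.1

section Fin

variable [Fintype V] [DecidableEq V]

/-- The degree of a vertex (counting multiplicities). -/
def degree (G : Multigraph V) (v : V) : ℕ := ∑ u, G.mult v u

/-- The minimum degree `δ(G)`. -/
noncomputable def minDegree (G : Multigraph V) : ℕ := sInf {n | ∃ v, G.degree v = n}

/-- The maximum edge multiplicity `μ(G)`. -/
def maxMult (G : Multigraph V) : ℕ := Finset.univ.sup fun p : V × V => G.mult p.1 p.2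

/-- `d(A)`: the number of edges between `A` and its complement. -/
def cut (G : Multigraph V) (A : Finset V) : ℕ := ∑ u ∈ A, ∑ v ∈ Aᶜ, G.mult u v

/-- The number of edges in an edge set. -/
def EdgeSub.card {G : Multigraph V} (F : G.EdgeSub) : ℕ := (∑ u, ∑ v, F.f u v) / 2

/-- The edge-boundary `N(A)` of a vertex set `A`, as an edge set. -/
def boundary (G : Multigraph V) (A : Finset V) : G.EdgeSub where
  f u v := if (u ∈ A ∧ v ∉ A) ∨ (v ∈ A ∧ u ∉ A) then G.mult u v else 0
  symm u v := by
    try dsimp only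
    by_cases h1 : u ∈ A <;> by_cases h2 : v ∈ A <;> simp [h1, h2, G.symm u v]
  le u v := by split_ifs <;> simp

/-- The edge-connectivity `λ(G)`. -/
noncomputable def edgeConn (G : Multigraph V) : ℕ :=
  sInf {n | ∃ F : G.EdgeSub, G.IsEdgeCut F ∧ F.card = n}

/-- The restricted edge-connectivity `λ'(G)`. -/
noncomputable def rEdgeConn (G : Multigraph V) : ℕ :=
  sInf {n | ∃ F : G.EdgeSub, G.IsRestrictedEdgeCut F ∧ F.card = n}

/-- The minimum edge degree `ξ(G) = min {d(u)+d(v)-2μ(uv) : uv ∈ E}`. -/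
noncomputable def minEdgeDegree (G : Multigraph V) : ℕ :=
  sInf {n | ∃ u v, G.Adj u v ∧ n = G.degree u + G.degree v - 2 * G.mult u v}

/-- A `λ`-fragment: a vertex set whose edge-boundary is a minimum edge-cut. -/
def IsFragment (G : Multigraph V) (A : Finset V) : Prop :=
  A.Nonempty ∧ Aᶜ.Nonempty ∧ G.IsEdgeCut (G.boundary A) ∧ G.cut A = G.edgeConn

/-- A `λ`-atom: a `λ`-fragment of minimum cardinality. -/
def IsAtom (G : Multigraph V) (A : Finset V) : Prop :=
  G.IsFragment A ∧ ∀ B : Finset V, G.IsFragment B → A.card ≤ B.card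

/-- A strict `λ`-fragment: a `λ`-fragment `C` with `2 ≤ |C| ≤ |V| - 2`. -/
def IsStrictFragment (G : Multigraph V) (A : Finset V) : Prop :=
  G.IsFragment A ∧ 2 ≤ A.card ∧ A.card ≤ Fintype.card V - 2

/-- A `λ`-superatom: a strict `λ`-fragment of minimum cardinality. -/
def IsSuperAtom (G : Multigraph V) (A : Finset V) : Prop :=
  G.IsStrictFragment A ∧ ∀ B : Finset V, G.IsStrictFragment B → A.card ≤ B.card

/-- A `λ'`-fragment: a vertex set whose edge-boundary is a minimum restricted edge-cut. -/
def IsRFragment (G : Multigraph V) (A : Finset V) : Prop :=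
  G.IsRestrictedEdgeCut (G.boundary A) ∧ G.cut A = G.rEdgeConn

/-- A `λ'`-atom: a `λ'`-fragment of minimum cardinality. -/
def IsRAtom (G : Multigraph V) (A : Finset V) : Prop :=
  G.IsRFragment A ∧ ∀ B : Finset V, G.IsRFragment B → A.card ≤ B.card

/-- `G` is super edge-connected if every minimum edge-cut is the set of all edges
incident with some vertex. -/
def IsSuperEdgeConnected (G : Multigraph V) : Prop :=
  ∀ F : G.EdgeSub, G.IsEdgeCut F → F.card = G.edgeConn →
    ∃ v : V, ∀ u w : V, F.f u w = if u = v ∨ w = v then G.mult u w else 0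

end Fin

end Multigraph

variable {V : Type*} [Fintype V] [DecidableEq V]

open Multigraph


/-- In a connected half-transitive multigraph with `δ(G) ≥ 2μ(G)` which is not `λ'`-optimal,
every `λ'`-atom has at least three vertices. -/
theorem rAtom_card_ge_three (G : Multigraph V) (V₁ V₂ : Finset V)
    (hG : G.Connected) (hht : G.IsHalfTransitive V₁ V₂)
    (hδ : 2 * G.maxMult ≤ G.minDegree)
    (hopt : G.rEdgeConn < G.minEdgeDegree)
    (A : Finset V) (hA : G.IsRAtom A) :
    3 ≤ A.card := by
  obtain ⟨⟨⟨hcut, hiso⟩, hval⟩, _⟩ := hA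
  by_contra h
  push_neg at h
  interval_cases hc : A.card
  · -- A empty: boundary is empty, deletion is G itself, contradicting edge-cut
    have hAe : A = ∅ := Finset.card_eq_zero.mp hc
    apply hcut
    refine ⟨hG.1, fun u v => ?_⟩
    have : (G.deleteEdges (G.boundary A)).Adj = G.Adj := by
      funext x y
      simp [deleteEdges, boundary, Multigraph.Adj, hAe]
    rw [Multigraph.Reachable, this]
    exact hG.2 u v
  · -- |A| = 1: the unique vertex is isolated after deletion
    obtain ⟨v, hv⟩ := Finset.card_eq_one.mp hc
    obtain ⟨u, hu⟩ := hiso v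
    have hvA : v ∈ A := by simp [hv]
    have huA : u ∉ A ∨ u = v := by
      rcases eq_or_ne u v with h | h
      · exact Or.inr h
      · left; simp [hv, h]
    rcases huA with h | h
    · have : (G.boundary A).f v u = G.mult v u := by
        simp [boundary, hvA, h]
      simp [deleteEdges, Multigraph.Adj, this] at hu
    · subst h
      simp [deleteEdges, Multigraph.Adj, G.loopless] at hu
  · -- |A| = 2
    obtain ⟨u, v, huv, hAuv⟩ := Finset.card_eq_two.mp hc
    -- u and v must be adjacent
    have hinA : ∀ x y, x ∈ A → y ∈ A → (G.boundary A).f x y = 0 := by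
      intro x y hx hy
      simp [boundary, hx, hy]
    have houtA : ∀ x y, x ∈ A → y ∉ A → (G.boundary A).f x y = G.mult x y := by
      intro x y hx hy
      simp [boundary, hx, hy]
    have hadj : G.Adj u v := by
      obtain ⟨w, hw⟩ := hiso u
      have huA : u ∈ A := by simp [hAuv]
      by_cases hwA : w ∈ A
      · have hwv : w = v := by
          rcases (by simpa [hAuv] using hwA : w = u ∨ w = v) with h | h
          · exfalso
            subst h
            simp [deleteEdges, Multigraph.Adj, G.loopless] at hw
          · exact h
        subst hwv
        have := hinA u w huA hwA
        simpa [deleteEdges, Multigraph.Adj, this] using hw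
      · exfalso
        have := houtA u w huA hwA
        simp [deleteEdges, Multigraph.Adj, this] at hw
    -- compute cut A
    have hdu : G.degree u = G.mult u v + ∑ y ∈ Aᶜ, G.mult u y := by
      rw [Multigraph.degree, ← Finset.sum_add_sum_compl A]
      congr 1
      rw [hAuv, Finset.sum_pair huv, G.loopless, zero_add]
    have hdv : G.degree v = G.mult v u + ∑ y ∈ Aᶜ, G.mult v y := by
      rw [Multigraph.degree, ← Finset.sum_add_sum_compl A]
      congr 1
      rw [hAuv, Finset.sum_pair huv, G.loopless, add_zero]
    have hcutA : G.cut A = (∑ y ∈ Aᶜ, G.mult u y) + ∑ y ∈ Aᶜ, G.mult v y := by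
      rw [Multigraph.cut, hAuv, Finset.sum_pair huv]
    have hsymm := G.symm u v
    have hkey : G.cut A + 2 * G.mult u v = G.degree u + G.degree v := by
      omega
    have hξ : G.minEdgeDegree ≤ G.degree u + G.degree v - 2 * G.mult u v := by
      apply Nat.sInf_le
      exact ⟨u, v, hadj, rfl⟩
    omega
end

section
/- Let G be a connected multigraph with at least 4 vertices. For any minimum restricted edge-cut F (a λ'-cut), the graph G − F has exactly two components, each with at least two vertices. -/
variable {V : Type*} [Fintype V] [DecidableEq V]

open Multigraph



namespace Multigraph

variable {V : Type*} [Fintype V] [DecidableEq V]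

lemma adj_symm' (G : Multigraph V) {u v : V} (h : G.Adj u v) : G.Adj v u := by
  unfold Adj at *; rwa [G.symm]

lemma reach_symm (G : Multigraph V) {u v : V} (h : G.Reachable u v) : G.Reachable v u := by
  induction h with
  | refl => exact Relation.ReflTransGen.refl
  | tail _ hbc ih => exact Relation.ReflTransGen.head (G.adj_symm' hbc) ih

lemma boundary_f (G : Multigraph V) (S : Finset V) (u v : V) :
    (G.boundary S).f u v = if (u ∈ S ∧ v ∉ S) ∨ (v ∈ S ∧ u ∉ S) then G.mult u v else 0 := rfl

lemma key (G : Multigraph V) (F : G.EdgeSub)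
    (hF : G.IsRestrictedEdgeCut F) (hmin : F.card = G.rEdgeConn)
    (S : Finset V) (hz : S.Nonempty) (hw : ∃ w, w ∉ S)
    (hcl : ∀ a ∈ S, ∀ b, (G.deleteEdges F).Adj a b → b ∈ S) :
    ∀ u v, F.f u v = (G.boundary S).f u v := by
  have hcross : ∀ a ∈ S, ∀ b ∉ S, F.f a b = G.mult a b := by
    intro a ha b hb
    refine le_antisymm (F.le a b) ?_
    by_contra h
    push_neg at h
    exact hb (hcl a ha b (by simpa [deleteEdges, Adj] using Nat.sub_pos_of_lt h))
  have hle : ∀ u v, (G.boundary S).f u v ≤ F.f u v := by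
    intro u v
    show (if (u ∈ S ∧ v ∉ S) ∨ (v ∈ S ∧ u ∉ S) then G.mult u v else 0) ≤ F.f u v
    split_ifs with h
    · rcases h with ⟨h1, h2⟩ | ⟨h1, h2⟩
      · exact (hcross u h1 v h2).ge
      · rw [G.symm, ← F.symm]; exact (hcross v h1 u h2).ge
    · exact Nat.zero_le _
  have hstay : ∀ {a b : V}, a ∈ S → (G.deleteEdges (G.boundary S)).Reachable a b → b ∈ S := by
    intro a b ha hr
    induction hr with
    | refl => exact ha
    | @tail c d _ hadj ih =>
        by_contra hd
        have h0 : (G.deleteEdges (G.boundary S)).mult c d = 0 := by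
          show G.mult c d - (if (c ∈ S ∧ d ∉ S) ∨ (d ∈ S ∧ c ∉ S) then G.mult c d else 0) = 0
          rw [if_pos (Or.inl ⟨ih, hd⟩)]; exact Nat.sub_self _
        simp [Adj, h0] at hadj
  have hrcut : G.IsRestrictedEdgeCut (G.boundary S) := by
    constructor
    · rintro ⟨-, hconn⟩
      obtain ⟨z, hzS⟩ := hz
      obtain ⟨w, hwS⟩ := hw
      exact hwS (hstay hzS (hconn z w))
    · intro v
      obtain ⟨u, hu⟩ := hF.2 v
      refine ⟨u, ?_⟩
      have h1 : G.mult v u - F.f v u ≤ G.mult v u - (G.boundary S).f v u :=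
        Nat.sub_le_sub_left (hle v u) _
      exact lt_of_lt_of_le hu h1
  have hcard_le : (G.boundary S).card ≤ F.card :=
    Nat.div_le_div_right
      (Finset.sum_le_sum fun u _ => Finset.sum_le_sum fun v _ => hle u v)
  have hcard_ge : F.card ≤ (G.boundary S).card := by
    rw [hmin]
    exact Nat.sInf_le ⟨G.boundary S, hrcut, rfl⟩
  have hcard : (G.boundary S).card = F.card := le_antisymm hcard_le hcard_ge
  intro u v
  by_contra hne
  have hlt : (G.boundary S).f u v < F.f u v := lt_of_le_of_ne (hle u v) fun h => hne h.symm
  have huv : u ≠ v := by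
    rintro rfl
    have h1 := F.le u u
    rw [G.loopless] at h1
    omega
  have hlt' : (G.boundary S).f v u < F.f v u := by
    rw [← (G.boundary S).symm, ← F.symm]; exact hlt
  -- sum comparison
  have hsplit : (∑ a, ∑ b, F.f a b)
      = (∑ a, ∑ b, (G.boundary S).f a b) + ∑ a, ∑ b, (F.f a b - (G.boundary S).f a b) := by
    rw [← Finset.sum_add_distrib]
    refine Finset.sum_congr rfl fun a _ => ?_
    rw [← Finset.sum_add_distrib]
    refine Finset.sum_congr rfl fun b _ => ?_
    have := hle a b
    omega
  have h2 : 2 ≤ ∑ a, ∑ b, (F.f a b - (G.boundary S).f a b) := by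
    have hrow : ∀ a b : V, F.f a b - (G.boundary S).f a b
        ≤ ∑ c, (F.f a c - (G.boundary S).f a c) := fun a b =>
      Finset.single_le_sum (f := fun c => F.f a c - (G.boundary S).f a c)
        (fun _ _ => Nat.zero_le _) (Finset.mem_univ b)
    have hpair : (∑ c, (F.f u c - (G.boundary S).f u c))
        + (∑ c, (F.f v c - (G.boundary S).f v c))
        ≤ ∑ a, ∑ c, (F.f a c - (G.boundary S).f a c) := by
      have hsub := Finset.sum_le_sum_of_subset
        (f := fun a => ∑ c, (F.f a c - (G.boundary S).f a c))
        (Finset.subset_univ ({u, v} : Finset V))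
      rwa [Finset.sum_pair huv] at hsub
    have hu1 := hrow u v
    have hv1 := hrow v u
    omega
  have hbig : (G.boundary S).card < F.card := by
    show (G.boundary S).card < (∑ a, ∑ b, F.f a b) / 2
    rw [hsplit]
    have : (∑ a, ∑ b, (G.boundary S).f a b) + 2
        ≤ (∑ a, ∑ b, (G.boundary S).f a b) + ∑ a, ∑ b, (F.f a b - (G.boundary S).f a b) :=
      Nat.add_le_add_left h2 _
    calc (G.boundary S).card
        < (∑ a, ∑ b, (G.boundary S).f a b) / 2 + 1 := Nat.lt_succ_self _
      _ = ((∑ a, ∑ b, (G.boundary S).f a b) + 2) / 2 := by omega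
      _ ≤ _ := Nat.div_le_div_right this
  omega

end Multigraph

/-- Removing a minimum restricted edge-cut from a connected multigraph on at least four
vertices leaves exactly two components, each with at least two vertices. -/
theorem rCut_two_components (G : Multigraph V) (hG : G.Connected)
    (h4 : 4 ≤ Fintype.card V) (F : G.EdgeSub)
    (hF : G.IsRestrictedEdgeCut F) (hmin : F.card = G.rEdgeConn) :
    ∃ A : Finset V, 2 ≤ A.card ∧ 2 ≤ Aᶜ.card ∧
      (∀ u ∈ A, ∀ v ∈ A, (G.deleteEdges F).Reachable u v) ∧
      (∀ u ∈ Aᶜ, ∀ v ∈ Aᶜ, (G.deleteEdges F).Reachable u v) ∧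
      (∀ u ∈ A, ∀ v ∈ Aᶜ, ¬ (G.deleteEdges F).Reachable u v) := by
  classical
  obtain ⟨hcut, hiso⟩ := hF
  have hne : Nonempty V := hG.1
  have hdisc : ∃ x y, ¬ (G.deleteEdges F).Reachable x y := by
    by_contra h
    push_neg at h
    exact hcut ⟨hne, h⟩
  obtain ⟨x, y, hxy⟩ := hdisc
  set G' := G.deleteEdges F with hG'
  set A : Finset V := Finset.univ.filter (fun v => G'.Reachable x v) with hA
  have hmemA : ∀ v, v ∈ A ↔ G'.Reachable x v := by intro v; simp [hA]
  have hxA : x ∈ A := (hmemA x).2 Relation.ReflTransGen.refl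
  have hyA : y ∉ A := fun h => hxy ((hmemA y).1 h)
  have hclA : ∀ a ∈ A, ∀ b, G'.Adj a b → b ∈ A := fun a ha b hab =>
    (hmemA b).2 (((hmemA a).1 ha).tail hab)
  set B : Finset V := Finset.univ.filter (fun v => G'.Reachable y v) with hB
  have hmemB : ∀ v, v ∈ B ↔ G'.Reachable y v := by intro v; simp [hB]
  have hyB : y ∈ B := (hmemB y).2 Relation.ReflTransGen.refl
  have hAB : ∀ v ∈ A, v ∉ B := fun v hv hv' =>
    hxy (((hmemA v).1 hv).trans (G'.reach_symm ((hmemB v).1 hv')))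
  have hclB : ∀ a ∈ B, ∀ b, G'.Adj a b → b ∈ B := fun a ha b hab =>
    (hmemB b).2 (((hmemB a).1 ha).tail hab)
  have hFA := G.key F ⟨hcut, hiso⟩ hmin A ⟨x, hxA⟩ ⟨y, hyA⟩ hclA
  have hFB := G.key F ⟨hcut, hiso⟩ hmin B ⟨y, hyB⟩ ⟨x, fun h => hAB x hxA h⟩ hclB
  have hcompl : ∀ v, v ∉ A → v ∈ B := by
    intro v hv
    by_contra hvB
    have hstep : ∀ c, c ∉ A → c ∉ B → ∀ d, G.Adj c d → d ∉ A ∧ d ∉ B := by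
      intro c hcA hcB d hcd
      have hposc : 0 < G.mult c d := hcd
      constructor
      · intro hdA
        have h1 : F.f c d = G.mult c d := by
          rw [hFA, G.boundary_f, if_pos (Or.inr ⟨hdA, hcA⟩)]
        have h2 : F.f c d = 0 := by
          rw [hFB, G.boundary_f, if_neg]
          rintro (⟨h3, -⟩ | ⟨h3, -⟩)
          · exact hcB h3
          · exact hAB d hdA h3
        omega
      · intro hdB
        have hdA : d ∉ A := fun h => hAB d h hdB
        have h1 : F.f c d = G.mult c d := by
          rw [hFB, G.boundary_f, if_pos (Or.inr ⟨hdB, hcB⟩)]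
        have h2 : F.f c d = 0 := by
          rw [hFA, G.boundary_f, if_neg]
          rintro (⟨h3, -⟩ | ⟨h3, -⟩)
          · exact hcA h3
          · exact hdA h3
        omega
    have hreach : ∀ b, G.Reachable v b → b ∉ A ∧ b ∉ B := by
      intro b hb
      induction hb with
      | refl => exact ⟨hv, hvB⟩
      | tail _ hadj ih => exact hstep _ ih.1 ih.2 _ hadj
    exact (hreach x (hG.2 v x)).1 hxA
  refine ⟨A, ?_, ?_, ?_, ?_, ?_⟩
  · obtain ⟨u, hu⟩ := hiso x
    have huA : u ∈ A := hclA x hxA u hu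
    have hux : u ≠ x := by
      rintro rfl
      have h0 : G'.mult u u = 0 := G'.loopless u
      simp [Multigraph.Adj, h0] at hu
    exact Finset.one_lt_card_iff.2 ⟨u, x, huA, hxA, hux⟩
  · obtain ⟨w, hw⟩ := hiso y
    have hwB : w ∈ B := hclB y hyB w hw
    have hwA : w ∉ A := fun h => hAB w h hwB
    have hwy : w ≠ y := by
      rintro rfl
      have h0 : G'.mult w w = 0 := G'.loopless w
      simp [Multigraph.Adj, h0] at hw
    exact Finset.one_lt_card_iff.2 ⟨w, y, Finset.mem_compl.2 hwA, Finset.mem_compl.2 hyA, hwy⟩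
  · intro u hu v hv
    exact (G'.reach_symm ((hmemA u).1 hu)).trans ((hmemA v).1 hv)
  · intro u hu v hv
    have hu' := hcompl u (Finset.mem_compl.1 hu)
    have hv' := hcompl v (Finset.mem_compl.1 hv)
    exact (G'.reach_symm ((hmemB u).1 hu')).trans ((hmemB v).1 hv')
  · intro u hu v hv hr
    exact Finset.mem_compl.1 hv ((hmemA v).2 (((hmemA u).1 hu).trans hr))
end
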